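/- Under the trajectory setup, define the unnormalized target trajectory weight w(τ) = p₁(s₁) · (∏_{t=1}^{T−1} p_dyn(s_{t+1} | s_t, a_t)) · exp(∑_{t=1}^{T} r(s_t, a_t)), the partition constant Z = ∑_τ w(τ), and the normalized distribution p̂(τ) = w(τ)/Z. Then KL(q_π ‖ p̂) = −∑_τ q_π(τ) · [∑_{t=1}^{T} (r(s_t, a_t) − log π(a_t | s_t)) + ∑_{t=1}^{T−1} Δr(s_t, a_t, s_{t+1})] + log Z. -/

import Mathlib

open Finset

/-- KL divergence between two probability mass functions on a finite type,
with the convention `0 · log 0 = 0` (which holds automatically in `ℝ`). -/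
noncomputable def KL {X : Type*} [Fintype X] (μ ν : PMF X) : ℝ :=
  ∑ x, (μ x).toReal * Real.log ((μ x).toReal / (ν x).toReal)

/-- The index `t` of a trajectory, regarded inside `Fin T`. -/
def idx1 {T : ℕ} (t : Fin (T - 1)) : Fin T := ⟨t.1, by have := t.2; omega⟩

/-- The index `t + 1` of a trajectory, regarded inside `Fin T`. -/
def idx2 {T : ℕ} (t : Fin (T - 1)) : Fin T := ⟨t.1 + 1, by have := t.2; omega⟩

/-- Probability of the trajectory `τ = (s₁, a₁, …, s_T, a_T)` under initial
distribution `p₁`, dynamics `dyn` and policy `π`: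
`p₁(s₁) · ∏_{t=1}^{T} π(a_t|s_t) · ∏_{t=1}^{T−1} dyn(s_{t+1}|s_t,a_t)`. -/
noncomputable def trajProb {S A : Type*} {T : ℕ} (hT : 1 ≤ T)
    (p₁ : PMF S) (dyn : S → A → PMF S) (π : S → PMF A)
    (τ : Fin T → S × A) : ℝ :=
  (p₁ (τ ⟨0, hT⟩).1).toReal
    * (∏ t : Fin T, (π (τ t).1 (τ t).2).toReal)
    * (∏ t : Fin (T - 1), (dyn (τ (idx1 t)).1 (τ (idx1 t)).2 (τ (idx2 t)).1).toReal)

/-- Entropy-regularized return of a trajectory: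
`∑_{t=1}^{T} (r(s_t,a_t) − log π(a_t|s_t))`. -/
noncomputable def entReturn {S A : Type*} {T : ℕ}
    (r : S → A → ℝ) (π : S → PMF A) (τ : Fin T → S × A) : ℝ :=
  ∑ t : Fin T, (r (τ t).1 (τ t).2 - Real.log ((π (τ t).1 (τ t).2)).toReal)

/-- The DARC reward correction `Δr(s,a,s') = log p_dyn(s'|s,a) − log q_dyn(s'|s,a)`. -/
noncomputable def Δr {S A : Type*} (qdyn pdyn : S → A → PMF S)
    (s : S) (a : A) (s' : S) : ℝ :=
  Real.log ((pdyn s a s').toReal) - Real.log ((qdyn s a s').toReal)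

/-- Expected (under the source trajectory distribution) sum of per-step KL
divergences between source and target dynamics. -/
noncomputable def expKL {S A : Type*} [Fintype S] [Fintype A] {T : ℕ}
    (hT : 1 ≤ T) (p₁ : PMF S) (qdyn pdyn : S → A → PMF S) (π : S → PMF A) : ℝ :=
  ∑ τ : Fin T → S × A, trajProb hT p₁ qdyn π τ *
    ∑ t : Fin (T - 1),
      KL (qdyn (τ (idx1 t)).1 (τ (idx1 t)).2) (pdyn (τ (idx1 t)).1 (τ (idx1 t)).2)

/-- Unnormalized target trajectory weight
`w(τ) = p₁(s₁) · ∏_{t=1}^{T−1} p_dyn(s_{t+1}|s_t,a_t) · exp(∑_{t=1}^{T} r(s_t,a_t))`. -/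
noncomputable def wTraj {S A : Type*} {T : ℕ} (hT : 1 ≤ T)
    (p₁ : PMF S) (pdyn : S → A → PMF S) (r : S → A → ℝ)
    (τ : Fin T → S × A) : ℝ :=
  (p₁ (τ ⟨0, hT⟩).1).toReal
    * (∏ t : Fin (T - 1), (pdyn (τ (idx1 t)).1 (τ (idx1 t)).2 (τ (idx2 t)).1).toReal)
    * Real.exp (∑ t : Fin T, r (τ t).1 (τ t).2)

lemma pmf_sum_toReal {X : Type*} [Fintype X] (μ : PMF X) : ∑ x, (μ x).toReal = 1 := by
  have h : ∑ x, μ x = 1 := by rw [← tsum_fintype (L := .unconditional _)]; exact μ.tsum_coe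
  rw [← ENNReal.toReal_sum (fun x _ => μ.apply_ne_top x), h, ENNReal.toReal_one]

lemma sum_mu_pi {S A : Type*} [Fintype S] [Fintype A] (μ : PMF S) (π : S → PMF A) :
    ∑ x : S × A, (μ x.1).toReal * (π x.1 x.2).toReal = 1 := by
  rw [Fintype.sum_prod_type]
  calc ∑ s, ∑ a, (μ s).toReal * (π s a).toReal
      = ∑ s, (μ s).toReal * ∑ a, (π s a).toReal := by
        refine Finset.sum_congr rfl fun s _ => ?_; rw [Finset.mul_sum]
    _ = 1 := by simp [pmf_sum_toReal]

lemma sum_trajProb {S A : Type*} [Fintype S] [Fintype A]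
    (dyn : S → A → PMF S) (π : S → PMF A) :
    ∀ (n : ℕ) (μ : PMF S),
      ∑ τ : Fin (n + 1) → S × A, trajProb (Nat.le_add_left 1 n) μ dyn π τ = 1 := by
  intro n
  induction n with
  | zero =>
    intro μ
    rw [← (Equiv.funUnique (Fin 1) (S × A)).symm.sum_comp]
    have heq : ∀ x : S × A,
        trajProb (Nat.le_add_left 1 0) μ dyn π ((Equiv.funUnique (Fin 1) (S × A)).symm x)
          = (μ x.1).toReal * (π x.1 x.2).toReal := by
      intro x
      simp only [trajProb]
      have hempty : (univ : Finset (Fin (1 - 1))) = ∅ := by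
        ext t; exact absurd t.2 (by omega)
      rw [hempty]
      simp
    rw [Finset.sum_congr rfl fun x _ => heq x, sum_mu_pi]
  | succ n ih =>
    intro μ
    rw [← Equiv.sum_comp (Fin.consEquiv (fun _ : Fin (n + 2) => S × A))]
    rw [Fintype.sum_prod_type]
    have key : ∀ (x : S × A) (τ : Fin (n + 1) → S × A),
        trajProb (Nat.le_add_left 1 (n+1)) μ dyn π
          ((Fin.consEquiv (fun _ : Fin (n + 2) => S × A)) (x, τ))
          = (μ x.1).toReal * (π x.1 x.2).toReal *
            trajProb (Nat.le_add_left 1 n) (dyn x.1 x.2) dyn π τ := by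
      intro x τ
      have hsymm : (Fin.consEquiv (fun _ : Fin (n + 2) => S × A)) (x, τ)
          = (Fin.cons x τ : Fin (n + 2) → S × A) := rfl
      rw [hsymm]
      simp only [trajProb]
      have h0 : (Fin.cons x τ : Fin (n + 2) → S × A) ⟨0, Nat.le_add_left 1 (n+1)⟩ = x := rfl
      rw [h0]
      have hπ : ∏ t : Fin (n + 1 + 1), ((π ((Fin.cons x τ : Fin (n+2) → S × A) t).1
            ((Fin.cons x τ : Fin (n+2) → S × A) t).2).toReal)
          = (π x.1 x.2).toReal * ∏ t : Fin (n + 1), (π (τ t).1 (τ t).2).toReal := by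
        rw [Fin.prod_univ_succ]; rfl
      have hdynsplit : ∏ t : Fin (n + 1 + 1 - 1),
            ((dyn ((Fin.cons x τ : Fin (n+2) → S × A) (idx1 t)).1
              ((Fin.cons x τ : Fin (n+2) → S × A) (idx1 t)).2
              ((Fin.cons x τ : Fin (n+2) → S × A) (idx2 t)).1).toReal)
          = (dyn x.1 x.2 (τ ⟨0, Nat.le_add_left 1 n⟩).1).toReal *
            ∏ t : Fin (n + 1 - 1),
              (dyn (τ (idx1 t)).1 (τ (idx1 t)).2 (τ (idx2 t)).1).toReal := by
        show (∏ t : Fin (n + 1),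
            ((dyn ((Fin.cons x τ : Fin (n+2) → S × A) (idx1 (T := n+2) t)).1
              ((Fin.cons x τ : Fin (n+2) → S × A) (idx1 (T := n+2) t)).2
              ((Fin.cons x τ : Fin (n+2) → S × A) (idx2 (T := n+2) t)).1).toReal)) = _
        rw [Fin.prod_univ_succ]
        refine congrArg₂ (· * ·) rfl ?_
        refine Finset.prod_congr rfl fun t _ => ?_
        have h1 : (Fin.cons x τ : Fin (n+2) → S × A) (idx1 (T := n+2) t.succ)
            = τ ⟨t.1, by omega⟩ := by
          have : idx1 (T := n+2) (t.succ) = Fin.succ ⟨t.1, by omega⟩ := rfl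
          rw [this, Fin.cons_succ]
        have h2 : (Fin.cons x τ : Fin (n+2) → S × A) (idx2 (T := n+2) t.succ)
            = τ ⟨t.1 + 1, by omega⟩ := by
          have : idx2 (T := n+2) (t.succ) = Fin.succ ⟨t.1 + 1, by omega⟩ := rfl
          rw [this, Fin.cons_succ]
        rw [h1, h2]; rfl
      rw [hπ, hdynsplit]
      ring
    calc ∑ x : S × A, ∑ τ : Fin (n+1) → S × A,
          trajProb (Nat.le_add_left 1 (n+1)) μ dyn π
            ((Fin.consEquiv (fun _ : Fin (n + 2) => S × A)) (x, τ))
        = ∑ x : S × A, (μ x.1).toReal * (π x.1 x.2).toReal := by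
          refine Finset.sum_congr rfl fun x _ => ?_
          simp only [key]
          rw [← Finset.mul_sum, ih (dyn x.1 x.2), mul_one]
      _ = 1 := sum_mu_pi μ π

/-- The variational identity (Equation 2) of "Off-Dynamics Reinforcement
Learning": the reverse KL divergence between the agent's source trajectory
distribution `q_π` and the exponentiated-reward target trajectory distribution
`p̂ = w/Z` equals, up to the constant `log Z`, the negative expected
entropy-regularized return augmented with the reward correction `Δr`. -/
theorem darc_variational_identity {S A : Type*} [Fintype S] [Fintype A]
    [Nonempty S] [Nonempty A] {T : ℕ} (hT : 1 ≤ T)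
    (p₁ : PMF S) (hp₁ : ∀ s, 0 < p₁ s)
    (qdyn pdyn : S → A → PMF S)
    (hq : ∀ s a s', 0 < qdyn s a s') (hp : ∀ s a s', 0 < pdyn s a s')
    (r : S → A → ℝ) (π : S → PMF A)
    (Z : ℝ) (hZ : Z = ∑ τ : Fin T → S × A, wTraj hT p₁ pdyn r τ) :
    (∑ τ : Fin T → S × A, trajProb hT p₁ qdyn π τ *
        Real.log (trajProb hT p₁ qdyn π τ / (wTraj hT p₁ pdyn r τ / Z)))
      = -(∑ τ : Fin T → S × A, trajProb hT p₁ qdyn π τ *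
            (entReturn r π τ +
              ∑ t : Fin (T - 1),
                Δr qdyn pdyn (τ (idx1 t)).1 (τ (idx1 t)).2 (τ (idx2 t)).1))
        + Real.log Z := by
  obtain ⟨n, rfl⟩ : ∃ n, T = n + 1 := ⟨T - 1, by omega⟩
  have hsum : ∑ τ : Fin (n + 1) → S × A, trajProb hT p₁ qdyn π τ = 1 :=
    sum_trajProb qdyn π n p₁
  have hw_pos : ∀ τ : Fin (n + 1) → S × A, 0 < wTraj hT p₁ pdyn r τ := by
    intro τ
    unfold wTraj
    have h1 : 0 < (p₁ (τ ⟨0, hT⟩).1).toReal :=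
      ENNReal.toReal_pos (hp₁ _).ne' (PMF.apply_ne_top _ _)
    have h2 : 0 < ∏ t : Fin (n + 1 - 1),
        (pdyn (τ (idx1 t)).1 (τ (idx1 t)).2 (τ (idx2 t)).1).toReal :=
      Finset.prod_pos fun t _ =>
        ENNReal.toReal_pos (hp _ _ _).ne' (PMF.apply_ne_top _ _)
    positivity
  have hZ_pos : 0 < Z := by
    rw [hZ]
    exact Finset.sum_pos (fun τ _ => hw_pos τ) Finset.univ_nonempty
  have hq_nonneg : ∀ τ : Fin (n + 1) → S × A, 0 ≤ trajProb hT p₁ qdyn π τ := by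
    intro τ
    unfold trajProb
    positivity
  have key : ∀ τ : Fin (n + 1) → S × A,
      trajProb hT p₁ qdyn π τ *
        Real.log (trajProb hT p₁ qdyn π τ / (wTraj hT p₁ pdyn r τ / Z))
      = -(trajProb hT p₁ qdyn π τ *
            (entReturn r π τ +
              ∑ t : Fin (n + 1 - 1),
                Δr qdyn pdyn (τ (idx1 t)).1 (τ (idx1 t)).2 (τ (idx2 t)).1))
        + trajProb hT p₁ qdyn π τ * Real.log Z := by
    intro τ
    by_cases h0 : trajProb hT p₁ qdyn π τ = 0
    · rw [h0]; ring
    · have hqτ : 0 < trajProb hT p₁ qdyn π τ := lt_of_le_of_ne (hq_nonneg τ) (Ne.symm h0)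
      have hπ_ne : ∀ t : Fin (n + 1), ((π (τ t).1 (τ t).2)).toReal ≠ 0 := by
        intro t
        have hprod : (∏ t : Fin (n + 1), (π (τ t).1 (τ t).2).toReal) ≠ 0 := by
          intro hzero
          apply h0
          unfold trajProb
          rw [hzero]; ring
        exact fun ht => hprod (Finset.prod_eq_zero (Finset.mem_univ t) ht)
      have hp₁_ne : (p₁ (τ ⟨0, hT⟩).1).toReal ≠ 0 :=
        (ENNReal.toReal_pos (hp₁ _).ne' (PMF.apply_ne_top _ _)).ne'
      have hqdyn_ne : ∀ t : Fin (n + 1 - 1),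
          (qdyn (τ (idx1 t)).1 (τ (idx1 t)).2 (τ (idx2 t)).1).toReal ≠ 0 := fun t =>
        (ENNReal.toReal_pos (hq _ _ _).ne' (PMF.apply_ne_top _ _)).ne'
      have hpdyn_ne : ∀ t : Fin (n + 1 - 1),
          (pdyn (τ (idx1 t)).1 (τ (idx1 t)).2 (τ (idx2 t)).1).toReal ≠ 0 := fun t =>
        (ENNReal.toReal_pos (hp _ _ _).ne' (PMF.apply_ne_top _ _)).ne'
      have hlog : Real.log (trajProb hT p₁ qdyn π τ / (wTraj hT p₁ pdyn r τ / Z))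
          = Real.log (trajProb hT p₁ qdyn π τ) - Real.log (wTraj hT p₁ pdyn r τ)
            + Real.log Z := by
        rw [Real.log_div hqτ.ne' (div_pos (hw_pos τ) hZ_pos).ne',
          Real.log_div (hw_pos τ).ne' hZ_pos.ne']
        ring
      have hlogq : Real.log (trajProb hT p₁ qdyn π τ)
          = Real.log (p₁ (τ ⟨0, hT⟩).1).toReal
            + (∑ t : Fin (n + 1), Real.log (π (τ t).1 (τ t).2).toReal)
            + ∑ t : Fin (n + 1 - 1),
                Real.log (qdyn (τ (idx1 t)).1 (τ (idx1 t)).2 (τ (idx2 t)).1).toReal := by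
        unfold trajProb
        rw [Real.log_mul (mul_ne_zero hp₁_ne (Finset.prod_ne_zero_iff.2 fun t _ => hπ_ne t)) (Finset.prod_ne_zero_iff.2 fun t _ => hqdyn_ne t),
          Real.log_mul hp₁_ne (Finset.prod_ne_zero_iff.2 fun t _ => hπ_ne t),
          Real.log_prod (fun t _ => hπ_ne t),
          Real.log_prod (fun t _ => hqdyn_ne t)]
      have hlogw : Real.log (wTraj hT p₁ pdyn r τ)
          = Real.log (p₁ (τ ⟨0, hT⟩).1).toReal
            + (∑ t : Fin (n + 1 - 1),
                Real.log (pdyn (τ (idx1 t)).1 (τ (idx1 t)).2 (τ (idx2 t)).1).toReal)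
            + ∑ t : Fin (n + 1), r (τ t).1 (τ t).2 := by
        unfold wTraj
        rw [Real.log_mul (mul_ne_zero hp₁_ne (Finset.prod_ne_zero_iff.2 fun t _ => hpdyn_ne t)) (Real.exp_ne_zero _),
          Real.log_mul hp₁_ne (Finset.prod_ne_zero_iff.2 fun t _ => hpdyn_ne t),
          Real.log_prod (fun t _ => hpdyn_ne t), Real.log_exp]
      rw [hlog, hlogq, hlogw]
      unfold entReturn Δr
      rw [Finset.sum_sub_distrib, Finset.sum_sub_distrib]
      ring
  rw [Finset.sum_congr rfl fun τ _ => key τ, Finset.sum_add_distrib,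
    Finset.sum_neg_distrib, ← Finset.sum_mul, hsum, one_mul]
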